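/- For even k with 4 ≤ k ≤ n/2, we have k·C(n − k/2 + 1, k/2 + 1) ≤ 4·C(n, k). -/
import Mathlib

lemma aux_mul_choose_le (a r : ℕ) : ∀ t, t * Nat.choose a r ≤ Nat.choose (a + t) (r + 1)
  | 0 => by simp
  | t + 1 => by
    have h1 := aux_mul_choose_le a r t
    have h2 : Nat.choose a r ≤ Nat.choose (a + t) r := Nat.choose_le_choose r (by omega)
    have h3 : Nat.choose (a + t + 1) (r + 1)
        = Nat.choose (a + t) r + Nat.choose (a + t) (r + 1) := Nat.choose_succ_succ _ _
    calc (t + 1) * Nat.choose a r = t * Nat.choose a r + Nat.choose a r := by ring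
    _ ≤ Nat.choose (a + t) (r + 1) + Nat.choose (a + t) r := Nat.add_le_add h1 h2
    _ = Nat.choose (a + (t + 1)) (r + 1) := by rw [show a + (t+1) = a + t + 1 by omega, h3]; omega

lemma aux_mono_bot {n a b : ℕ} (hab : a ≤ b) (hb : b ≤ n / 2) :
    Nat.choose n a ≤ Nat.choose n b := by
  induction b, hab using Nat.le_induction with
  | base => exact le_refl _
  | succ b hab ih =>
    exact (ih (by omega)).trans (Nat.choose_le_succ_of_lt_half_left (by omega))

/-- For even `k` with `4 ≤ k` and `k ≤ n/2`,
`k·C(n-k/2+1, k/2+1) ≤ 4·C(n,k)`. -/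
theorem binom_bound (n k : ℕ) (hk : Even k) (h4 : 4 ≤ k) (hkn : 2 * k ≤ n) :
    k * Nat.choose (n - k / 2 + 1) (k / 2 + 1) ≤ 4 * Nat.choose n k := by
  obtain ⟨m, hm⟩ := hk
  have hm' : k = 2 * m := by omega
  subst hm'
  clear hm
  have hm2 : 2 ≤ m := by omega
  set t := (m + 1) / 2 with ht
  have hdiv : (2 * m) / 2 = m := by omega
  rw [hdiv]
  have h1 : t * Nat.choose (n - m + 1) (m + 1) ≤ Nat.choose (n - m + 1 + t) (m + 2) :=
    aux_mul_choose_le _ _ t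
  have h2 : Nat.choose (n - m + 1 + t) (m + 2) ≤ Nat.choose n (m + 2) :=
    Nat.choose_le_choose _ (by omega)
  have h3 : Nat.choose n (m + 2) ≤ Nat.choose n (2 * m) :=
    aux_mono_bot (by omega) (by omega)
  calc 2 * m * Nat.choose (n - m + 1) (m + 1)
      ≤ 4 * (t * Nat.choose (n - m + 1) (m + 1)) := by
        have : 2 * m ≤ 4 * t := by omega
        rw [← Nat.mul_assoc]
        exact Nat.mul_le_mul_right _ this
    _ ≤ 4 * Nat.choose n (2 * m) := by
        have := h1.trans (h2.trans h3)
        omega
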